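/- Let Ř_t and R̂_t be rate matrices on a finite set X with off-diagonal entries positive and rows summing to zero, and let q_t be a probability distribution on X. Define g_t(x) = ∑_{y≠x}( R̂_t(x,y) − Ř_t(x,y) + Ř_t(x,y) log(Ř_t(x,y)/R̂_t(x,y)) ). If the off-diagonal entries of both matrices lie in an interval [m, M] with 0 < m ≤ M, then |g_t(x) − g_s(x)| ≤ (1 + log M + log(1/m) + 1)·∑_{y≠x} |Ř_t(x,y) − Ř_s(x,y)| whenever R̂_t(x,·) = R̂_s(x,·) off the diagonal. -/

import Mathlib

open Real Finset

lemma key_pt (m M p a b : ℝ) (hm : 0 < m) (hmM : m ≤ M)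
    (hp : p ∈ Set.Icc m M) (ha : a ∈ Set.Icc m M) (hb : b ∈ Set.Icc m M) :
    |(p - a + a * Real.log (a / p)) - (p - b + b * Real.log (b / p))| ≤
      (Real.log M + Real.log (1 / m)) * |a - b| := by
  have hp0 : 0 < p := lt_of_lt_of_le hm hp.1
  set f : ℝ → ℝ := fun z => z * Real.log z - z * Real.log p - z with hf
  have hderiv : ∀ z ∈ Set.Icc m M, HasDerivWithinAt f (Real.log z - Real.log p) (Set.Icc m M) z := by
    intro z hz
    have hz0 : z ≠ 0 := ne_of_gt (lt_of_lt_of_le hm hz.1)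
    have h1 := (Real.hasDerivAt_mul_log hz0)
    have h2 : HasDerivAt f (Real.log z + 1 - Real.log p - 1) z := by
      have h3 := (h1.sub ((hasDerivAt_id z).mul_const (Real.log p))).sub (hasDerivAt_id z)
      rw [one_mul] at h3
      exact h3
    have : HasDerivAt f (Real.log z - Real.log p) z := by
      convert h2 using 1; ring
    exact this.hasDerivWithinAt
  have hbound : ∀ z ∈ Set.Icc m M, ‖Real.log z - Real.log p‖ ≤ Real.log M + Real.log (1 / m) := by
    intro z hz
    have hz0 : 0 < z := lt_of_lt_of_le hm hz.1
    have h1m : Real.log (1 / m) = -Real.log m := by rw [one_div, Real.log_inv]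
    rw [Real.norm_eq_abs, abs_le]
    constructor
    · have h1 : Real.log m ≤ Real.log z := Real.log_le_log hm hz.1
      have h2 : Real.log p ≤ Real.log M := Real.log_le_log hp0 hp.2
      rw [h1m]; linarith
    · have h1 : Real.log z ≤ Real.log M := Real.log_le_log hz0 hz.2
      have h2 : Real.log m ≤ Real.log p := Real.log_le_log hm hp.1
      rw [h1m]; linarith
  have := (convex_Icc m M).norm_image_sub_le_of_norm_hasDerivWithin_le hderiv hbound hb ha
  have heq : (p - a + a * Real.log (a / p)) - (p - b + b * Real.log (b / p)) = f a - f b := by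
    have ha0 : a ≠ 0 := ne_of_gt (lt_of_lt_of_le hm ha.1)
    have hb0 : b ≠ 0 := ne_of_gt (lt_of_lt_of_le hm hb.1)
    simp only [hf, Real.log_div ha0 (ne_of_gt hp0), Real.log_div hb0 (ne_of_gt hp0)]
    ring
  rw [heq]
  simpa [Real.norm_eq_abs, abs_sub_comm] using this

/-- Lemma 4 (dominant discretization error): the change of the Bregman term
`g_t(x) = ∑_{y≠x}(R̂_t(x,y) − Ř_t(x,y) + Ř_t(x,y) log(Ř_t(x,y)/R̂_t(x,y)))` in time is
controlled by the L¹ change of the true reverse rate row, with a logarithmic factor,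
when the sampling rate row is the same at times `s` and `t` and all off-diagonal
rates lie in `[m, M]`. -/
theorem bregman_time_difference_bound {X : Type*} [Fintype X] [DecidableEq X]
    (Rq Rp : ℝ → X → X → ℝ) (s t : ℝ) (x : X) (m M : ℝ)
    (hm : 0 < m) (hmM : m ≤ M)
    (hRq : ∀ u ∈ ({s, t} : Set ℝ), ∀ y, y ≠ x → Rq u x y ∈ Set.Icc m M)
    (hRp : ∀ u ∈ ({s, t} : Set ℝ), ∀ y, y ≠ x → Rp u x y ∈ Set.Icc m M)
    (hconst : ∀ y, y ≠ x → Rp t x y = Rp s x y) :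
    |(∑ y ∈ Finset.univ.filter (fun y => y ≠ x),
        (Rp t x y - Rq t x y + Rq t x y * Real.log (Rq t x y / Rp t x y))) -
      (∑ y ∈ Finset.univ.filter (fun y => y ≠ x),
        (Rp s x y - Rq s x y + Rq s x y * Real.log (Rq s x y / Rp s x y)))| ≤
      (1 + Real.log M + Real.log (1 / m) + 1) *
        ∑ y ∈ Finset.univ.filter (fun y => y ≠ x), |Rq t x y - Rq s x y| := by
  have hs : s ∈ ({s, t} : Set ℝ) := Or.inl rfl
  have ht : t ∈ ({s, t} : Set ℝ) := Or.inr rfl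
  rw [← Finset.sum_sub_distrib]
  calc |∑ y ∈ Finset.univ.filter (fun y => y ≠ x),
        ((Rp t x y - Rq t x y + Rq t x y * Real.log (Rq t x y / Rp t x y)) -
         (Rp s x y - Rq s x y + Rq s x y * Real.log (Rq s x y / Rp s x y)))|
      ≤ ∑ y ∈ Finset.univ.filter (fun y => y ≠ x),
        |(Rp t x y - Rq t x y + Rq t x y * Real.log (Rq t x y / Rp t x y)) -
         (Rp s x y - Rq s x y + Rq s x y * Real.log (Rq s x y / Rp s x y))| :=
        Finset.abs_sum_le_sum_abs _ _
    _ ≤ ∑ y ∈ Finset.univ.filter (fun y => y ≠ x),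
        (1 + Real.log M + Real.log (1 / m) + 1) * |Rq t x y - Rq s x y| := by
        apply Finset.sum_le_sum
        intro y hy
        have hyx : y ≠ x := (Finset.mem_filter.mp hy).2
        have h := key_pt m M (Rp s x y) (Rq t x y) (Rq s x y) hm hmM
          (hRp s hs y hyx) (hRq t ht y hyx) (hRq s hs y hyx)
        rw [hconst y hyx]
        refine h.trans ?_
        have := abs_nonneg (Rq t x y - Rq s x y)
        nlinarith
    _ = (1 + Real.log M + Real.log (1 / m) + 1) *
        ∑ y ∈ Finset.univ.filter (fun y => y ≠ x), |Rq t x y - Rq s x y| :=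
        (Finset.mul_sum _ _ _).symm
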